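/- The series sum over k≥1 of 1/(α^(2k)·(2k-1)(2k+1)) equals 1/2 - (3/4)ln(α), where α = (1+√5)/2 is the golden ratio. -/

import Mathlib

theorem stmt_14 :
    ∑' k : ℕ, 1 / (((1 + Real.sqrt 5) / 2) ^ (2 * k + 2) * (2 * (k : ℝ) + 1) * (2 * k + 3)) =
      1 / 2 - (3 / 4) * Real.log ((1 + Real.sqrt 5) / 2) := by
  set α : ℝ := (1 + Real.sqrt 5) / 2 with hαdef
  have hs : Real.sqrt 5 ^ 2 = 5 := Real.sq_sqrt (by norm_num)
  have hsn : 0 ≤ Real.sqrt 5 := Real.sqrt_nonneg 5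
  have hα1 : 1 < α := by rw [hαdef]; nlinarith
  have hα0 : 0 < α := by linarith
  have hα2 : α ^ 2 = α + 1 := by rw [hαdef]; nlinarith
  set x : ℝ := α⁻¹ with hxdef
  have hx0 : 0 < x := inv_pos.mpr hα0
  have hxα : x * α = 1 := inv_mul_cancel₀ (ne_of_gt hα0)
  have hx1 : x < 1 := by rw [hxdef]; exact inv_lt_one_of_one_lt₀ hα1
  have hx : |x| < 1 := by rw [abs_of_pos hx0]; exact hx1
  have h1x : 1 + x = α := by
    field_simp [hxdef]
    nlinarith [hα2]
  have h2x : 1 - x = x ^ 2 := by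
    rw [hxdef]
    field_simp
    nlinarith [hα2]
  have hT : Real.log (1 + x) - Real.log (1 - x) = 3 * Real.log α := by
    rw [h1x, h2x, Real.log_pow, hxdef, Real.log_inv]
    push_cast; ring
  have hb := Real.hasSum_log_sub_log_of_abs_lt_one hx
  rw [hT] at hb
  have hb1 : HasSum (fun k : ℕ => (2 : ℝ) * (1 / (2 * (k + 1 : ℕ) + 1)) * x ^ (2 * (k + 1 : ℕ) + 1))
      (3 * Real.log α - 2 * x) := by
    have := (hasSum_nat_add_iff' (f := fun k : ℕ => (2 : ℝ) * (1 / (2 * k + 1)) * x ^ (2 * k + 1)) 1).mpr hb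
    simpa using this
  have ha := (hb.mul_left (x / 4)).sub (hb1.mul_left (1 / (4 * x)))
  have heq : (fun k : ℕ => 1 / (α ^ (2 * k + 2) * (2 * (k : ℝ) + 1) * (2 * k + 3))) =
      fun k : ℕ => x / 4 * ((2 : ℝ) * (1 / (2 * k + 1)) * x ^ (2 * k + 1)) -
        1 / (4 * x) * ((2 : ℝ) * (1 / (2 * (k + 1 : ℕ) + 1)) * x ^ (2 * (k + 1 : ℕ) + 1)) := by
    funext k
    have hk1 : (2 * (k : ℝ) + 1) ≠ 0 := by positivity
    have hk3 : (2 * (k : ℝ) + 3) ≠ 0 := by positivity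
    have hαne : α ≠ 0 := ne_of_gt hα0
    rw [hxdef]
    push_cast
    simp only [inv_pow]
    field_simp
    ring
  rw [heq, ha.tsum_eq]
  have hmul : (α - 1) * α = 1 := by nlinarith [hα2]
  have hxval : (α : ℝ)⁻¹ = α - 1 := inv_eq_of_mul_eq_one_left hmul
  have hne : α - 1 ≠ 0 := sub_ne_zero.mpr (ne_of_gt hα1)
  have hlog : x / 4 * (3 * Real.log α) - 1 / (4 * x) * (3 * Real.log α - 2 * x) =
      1 / 2 - 3 / 4 * Real.log α := by
    have key : (1 : ℝ) / (4 * (α - 1)) = α / 4 := by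
      rw [div_eq_div_iff (by positivity) (by norm_num)]
      nlinarith [hmul]
    rw [hxdef, hxval, key]
    linear_combination (1 / 2) * hmul
  rw [hlog]
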